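/- (Example 4.6, Riemannian normal is not J̃-tangent.) For f(x, y, z) = (x + y, sinh z, x − y, cosh z), define N : ℝ³ → ℝ⁴ by N(x, y, z) = (0, sinh z / √(cosh²z + sinh²z), 0, −cosh z / √(cosh²z + sinh²z)). Then with respect to the standard Euclidean inner product on ℝ⁴: ⟨N, ∂f/∂x⟩ = ⟨N, ∂f/∂y⟩ = ⟨N, ∂f/∂z⟩ = 0 and ⟨N, N⟩ = 1 at every point, so N is the unit normal field of f; moreover, for every point with z ≠ 0, the vector J̃N does NOT lie in the span of ∂f/∂x, ∂f/∂y, ∂f/∂z, i.e., N is not J̃-tangent there. -/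

import Mathlib

set_option linter.unusedVariables false

noncomputable section

/-- The canonical para-complex structure on `ℝ⁴`: `J̃(a,b,c,d) = (c,d,a,b)`. -/
def J4 (w : Fin 4 → ℝ) : Fin 4 → ℝ := ![w 2, w 3, w 0, w 1]

/-- The immersion of Example 4.6. -/
def fEx (x y z : ℝ) : Fin 4 → ℝ := ![x + y, Real.sinh z, x - y, Real.cosh z]

/-- The Euclidean unit normal field of Example 4.6. -/
def NEx (x y z : ℝ) : Fin 4 → ℝ :=
  ![0, Real.sinh z / Real.sqrt (Real.cosh z ^ 2 + Real.sinh z ^ 2), 0,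
    -(Real.cosh z / Real.sqrt (Real.cosh z ^ 2 + Real.sinh z ^ 2))]

/-- `∂f/∂x`. -/
def fExx (x y z : ℝ) : Fin 4 → ℝ := deriv (fun t => fEx t y z) x
/-- `∂f/∂y`. -/
def fExy (x y z : ℝ) : Fin 4 → ℝ := deriv (fun t => fEx x t z) y
/-- `∂f/∂z`. -/
def fExz (x y z : ℝ) : Fin 4 → ℝ := deriv (fun t => fEx x y t) z

lemma fExx_eq (x y z : ℝ) : fExx x y z = ![1,0,1,0] := by
  have h : HasDerivAt (fun t => fEx t y z) ![1,0,1,0] x := by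
    rw [hasDerivAt_pi]
    intro i
    fin_cases i <;> simp [fEx]
    · exact hasDerivAt_id x
    · exact hasDerivAt_const _ _
    · simpa using (hasDerivAt_id x).sub_const y
    · exact hasDerivAt_const _ _
  exact h.deriv

lemma fExy_eq (x y z : ℝ) : fExy x y z = ![1,0,-1,0] := by
  have h : HasDerivAt (fun t => fEx x t z) ![1,0,-1,0] y := by
    rw [hasDerivAt_pi]
    intro i
    fin_cases i <;> simp [fEx]
    · exact (hasDerivAt_id y).const_add x
    · exact hasDerivAt_const _ _
    · simpa using (hasDerivAt_id y).const_sub x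
    · exact hasDerivAt_const _ _
  exact h.deriv

lemma fExz_eq (x y z : ℝ) : fExz x y z = ![0, Real.cosh z, 0, Real.sinh z] := by
  have h : HasDerivAt (fun t => fEx x y t) ![0, Real.cosh z, 0, Real.sinh z] z := by
    rw [hasDerivAt_pi]
    intro i
    fin_cases i <;> simp [fEx]
    · exact hasDerivAt_const _ _
    · exact Real.hasDerivAt_sinh z
    · exact hasDerivAt_const _ _
    · exact Real.hasDerivAt_cosh z
  exact h.deriv

/-- Example 4.6, the Riemannian normal is not `J̃`-tangent:
`N` is orthogonal to `∂f/∂x, ∂f/∂y, ∂f/∂z` and has unit length with respect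
to the standard Euclidean inner product on `ℝ⁴`, so `N` is the unit normal of
`f`; but for `z ≠ 0`, `J̃N` does not lie in `span{∂f/∂x, ∂f/∂y, ∂f/∂z}`,
i.e. `N` is not `J̃`-tangent there. -/
theorem stmt_10 :
    ∀ x y z : ℝ,
      (∑ i : Fin 4, NEx x y z i * fExx x y z i) = 0 ∧
      (∑ i : Fin 4, NEx x y z i * fExy x y z i) = 0 ∧
      (∑ i : Fin 4, NEx x y z i * fExz x y z i) = 0 ∧
      (∑ i : Fin 4, NEx x y z i * NEx x y z i) = 1 ∧
      (z ≠ 0 →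
        J4 (NEx x y z) ∉
          Submodule.span ℝ
            ({fExx x y z, fExy x y z, fExz x y z} : Set (Fin 4 → ℝ))) := by
  intro x y z
  set s := Real.sqrt (Real.cosh z ^ 2 + Real.sinh z ^ 2) with hs
  have hpos : 0 < Real.cosh z ^ 2 + Real.sinh z ^ 2 := by
    have := Real.cosh_pos (x := z)
    positivity
  have hspos : 0 < s := Real.sqrt_pos.mpr hpos
  have hs2 : s ^ 2 = Real.cosh z ^ 2 + Real.sinh z ^ 2 := Real.sq_sqrt hpos.le
  refine ⟨?_, ?_, ?_, ?_, ?_⟩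
  · simp [Fin.sum_univ_four, NEx, fExx_eq]
  · simp [Fin.sum_univ_four, NEx, fExy_eq]
  · simp [Fin.sum_univ_four, NEx, fExz_eq]; ring
  · simp only [Fin.sum_univ_four, NEx]
    simp only [Matrix.cons_val_zero, Matrix.cons_val_one, Matrix.head_cons,
      Matrix.cons_val_two, Matrix.cons_val_three, Matrix.tail_cons]
    field_simp
    linarith [hs2]
  · intro hz hmem
    have hsh : Real.sinh z ≠ 0 := Real.sinh_ne_zero.mpr hz
    have hch : (0:ℝ) < Real.cosh z := Real.cosh_pos z
    set φ : (Fin 4 → ℝ) →ₗ[ℝ] ℝ :=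
      Real.sinh z • (LinearMap.proj 1 : (Fin 4 → ℝ) →ₗ[ℝ] ℝ)
        - Real.cosh z • (LinearMap.proj 3 : (Fin 4 → ℝ) →ₗ[ℝ] ℝ) with hφ
    have hker : Submodule.span ℝ ({fExx x y z, fExy x y z, fExz x y z} : Set (Fin 4 → ℝ))
        ≤ LinearMap.ker φ := by
      rw [Submodule.span_le]
      intro v hv
      simp only [Set.mem_insert_iff, Set.mem_singleton_iff] at hv
      rcases hv with rfl | rfl | rfl <;>
        simp [hφ, fExx_eq, fExy_eq, fExz_eq, LinearMap.sub_apply, LinearMap.smul_apply,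
          LinearMap.proj_apply, mul_comm]
    have h0 : φ (J4 (NEx x y z)) = 0 := hker hmem
    have : φ (J4 (NEx x y z)) = -(2 * Real.sinh z * Real.cosh z) / s := by
      simp [hφ, J4, NEx, LinearMap.sub_apply, LinearMap.smul_apply, LinearMap.proj_apply]
      ring
    rw [this] at h0
    have : 2 * Real.sinh z * Real.cosh z ≠ 0 := by positivity
    have h2 : 2 * Real.sinh z * Real.cosh z = 0 := by
      field_simp at h0
      linarith
    exact this h2
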